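/- arXiv:2206.10240 — 2 statements merged into one kernel-verified Lean document; each statement's English description precedes it below -/
import Mathlib

section
/- Let X ∈ ℝ^{n×p} have XᵀX invertible, y ∈ ℝⁿ with y ≠ X β̂_OLS, and let ε > 0. Suppose the sketch X* ∈ ℝ^{n×p} has X*ᵀX invertible and satisfies ‖X − X*‖₂ ≤ ε′‖X‖₂, where ε′ obeys 0 < ε′ ≤ (1/κ²(X)) · (1 + (κ²(X)+1)‖y‖ / (ε^{1/2} ‖y − X β̂_OLS‖))^{-1}. Then the core-elements estimator β̃ = (X*ᵀX)⁻¹X*ᵀy satisfies ‖y − X β̂_OLS‖² ≤ ‖y − X β̃‖² ≤ (1+ε)‖y − X β̂_OLS‖². -/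
open Matrix
open scoped Matrix.Norms.L2Operator

noncomputable def vnorm {n : ℕ} (v : Fin n → ℝ) : ℝ := Real.sqrt (∑ i, v i ^ 2)

lemma vnorm_eq {n : ℕ} (v : Fin n → ℝ) :
    vnorm v = ‖(EuclideanSpace.equiv (Fin n) ℝ).symm v‖ := by
  rw [EuclideanSpace.norm_eq]
  simp [vnorm, Real.norm_eq_abs, sq_abs]

lemma vnorm_nonneg {n : ℕ} (v : Fin n → ℝ) : 0 ≤ vnorm v := Real.sqrt_nonneg _

lemma vnorm_sq {n : ℕ} (v : Fin n → ℝ) : vnorm v ^ 2 = ∑ i, v i ^ 2 :=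
  Real.sq_sqrt (Finset.sum_nonneg fun i _ => sq_nonneg _)

lemma vnorm_pos {n : ℕ} {v : Fin n → ℝ} (hv : v ≠ 0) : 0 < vnorm v := by
  rw [vnorm_eq]; simpa using hv

lemma vnorm_mulVec_le {m n : ℕ} (A : Matrix (Fin m) (Fin n) ℝ) (v : Fin n → ℝ) :
    vnorm (A *ᵥ v) ≤ ‖A‖ * vnorm v := by
  rw [vnorm_eq, vnorm_eq]
  exact A.l2_opNorm_mulVec ((EuclideanSpace.equiv (Fin n) ℝ).symm v)

lemma vnorm_sq_eq_dot {n : ℕ} (v : Fin n → ℝ) : vnorm v ^ 2 = v ⬝ᵥ v := by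
  rw [vnorm_sq]; simp [dotProduct, sq]

lemma pythagoras {n p : ℕ} (X : Matrix (Fin n) (Fin p) ℝ) (r : Fin n → ℝ)
    (hr : Xᵀ *ᵥ r = 0) (u : Fin p → ℝ) :
    vnorm (r + X *ᵥ u) ^ 2 = vnorm r ^ 2 + vnorm (X *ᵥ u) ^ 2 := by
  have horth : r ⬝ᵥ (X *ᵥ u) = 0 := by
    rw [dotProduct_mulVec, ← mulVec_transpose, hr, zero_dotProduct]
  have horth' : (X *ᵥ u) ⬝ᵥ r = 0 := by rw [dotProduct_comm]; exact horth
  rw [vnorm_sq_eq_dot, vnorm_sq_eq_dot, vnorm_sq_eq_dot, add_dotProduct,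
    dotProduct_add, dotProduct_add, horth, horth']
  ring

/-- pure scalar part -/
lemma scalar_step {r s δ e t : ℝ} (hrpos : 0 < r) (hδ0 : 0 ≤ δ) (hs0 : 0 ≤ s)
    (he : 0 < e) (ht0 : 0 ≤ t) (hpyth : s ^ 2 = r ^ 2 + δ ^ 2)
    (hδle : δ ≤ t * s) (ht : t * (1 + e) ≤ e) : δ ≤ e * r := by
  have hsrd : s ≤ r + δ := by
    nlinarith [mul_nonneg hrpos.le hδ0]
  have h1t : t < 1 := by nlinarith
  have hd1 : δ * (1 - t) ≤ t * r := by nlinarith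
  have hd2 : t ≤ e * (1 - t) := by nlinarith
  nlinarith [mul_pos hrpos (sub_pos.mpr h1t)]

/-- bound on t = ε'·κ2 -/
lemma t_bound {r e κ2 vy ε' : ℝ} (hrpos : 0 < r) (he : 0 < e) (hκpos : 0 < κ2)
    (hvy : 0 ≤ vy) (hry : r ≤ vy) (hε'pos : 0 < ε')
    (hε'le : ε' ≤ (1 / κ2) * (1 + (κ2 + 1) * vy / (e * r))⁻¹) :
    ε' * κ2 * (1 + e) ≤ e := by
  set Z : ℝ := (1 + (κ2 + 1) * vy / (e * r))⁻¹ with hZ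
  have h1 : ε' * κ2 ≤ Z := by
    have h := mul_le_mul_of_nonneg_right hε'le hκpos.le
    calc ε' * κ2 ≤ (1 / κ2) * Z * κ2 := h
      _ = Z := by field_simp
  have hc : (1 : ℝ) / e ≤ (κ2 + 1) * vy / (e * r) := by
    rw [div_le_div_iff₀ he (by positivity)]
    have hrv : r ≤ (κ2 + 1) * vy := by nlinarith
    nlinarith [mul_le_mul_of_nonneg_right hrv he.le]
  have h2 : Z ≤ (1 + 1 / e)⁻¹ := by
    rw [hZ]
    apply inv_anti₀ (by positivity)
    linarith
  have h3 : (1 + 1 / e)⁻¹ = e / (1 + e) := by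
    rw [one_add_div he.ne', inv_div, add_comm]
  have h4 : ε' * κ2 ≤ e / (1 + e) := h1.trans (h2.trans_eq h3)
  exact (le_div_iff₀ (by positivity)).mp h4

set_option maxHeartbeats 1000000 in
/-- **Core-elements coreset theorem.**  If the sketch `X*` satisfies
`‖X − X*‖₂ ≤ ε′‖X‖₂` with `ε′` small enough (in terms of the squared condition
number `κ²(X) = ‖X‖₂²‖(XᵀX)⁻¹‖₂`), then the core-elements estimator
`β̃ = (X*ᵀX)⁻¹X*ᵀy` achieves the `(1+ε)`-relative error. -/
theorem core_elements_coreset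
    (n p : ℕ) (hp : 1 ≤ p) (hpn : p ≤ n)
    (X Xs : Matrix (Fin n) (Fin p) ℝ) (y : Fin n → ℝ) (ε ε' : ℝ)
    (hX : IsUnit (Xᵀ * X).det) (hXs : IsUnit (Xsᵀ * X).det)
    (βOLS : Fin p → ℝ) (hβOLS : βOLS = (Xᵀ * X)⁻¹ *ᵥ (Xᵀ *ᵥ y))
    (βt : Fin p → ℝ) (hβt : βt = (Xsᵀ * X)⁻¹ *ᵥ (Xsᵀ *ᵥ y))
    (hy : y ≠ X *ᵥ βOLS) (hε : 0 < ε)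
    (κ2 : ℝ) (hκ2 : κ2 = ‖X‖ ^ 2 * ‖(Xᵀ * X)⁻¹‖)
    (hL : ‖X - Xs‖ ≤ ε' * ‖X‖)
    (hε'pos : 0 < ε')
    (hε'le : ε' ≤ (1 / κ2) *
      (1 + (κ2 + 1) * vnorm y / (Real.sqrt ε * vnorm (y - X *ᵥ βOLS)))⁻¹) :
    vnorm (y - X *ᵥ βOLS) ^ 2 ≤ vnorm (y - X *ᵥ βt) ^ 2 ∧
      vnorm (y - X *ᵥ βt) ^ 2 ≤ (1 + ε) * vnorm (y - X *ᵥ βOLS) ^ 2 := by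
  have hXX : (Xᵀ * X) * (Xᵀ * X)⁻¹ = 1 := Matrix.mul_nonsing_inv _ hX
  have hXXl : (Xᵀ * X)⁻¹ * (Xᵀ * X) = 1 := Matrix.nonsing_inv_mul _ hX
  have hNβ : (Xᵀ * X) *ᵥ βOLS = Xᵀ *ᵥ y := by
    rw [hβOLS, mulVec_mulVec, hXX, one_mulVec]
  have hnormal : Xᵀ *ᵥ (y - X *ᵥ βOLS) = 0 := by
    rw [mulVec_sub, mulVec_mulVec, hNβ, sub_self]
  have hNβt : (Xsᵀ * X) *ᵥ βt = Xsᵀ *ᵥ y := by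
    rw [hβt, mulVec_mulVec, Matrix.mul_nonsing_inv _ hXs, one_mulVec]
  have hkey : βOLS - βt = (Xᵀ * X)⁻¹ *ᵥ ((X - Xs)ᵀ *ᵥ (y - X *ᵥ βt)) := by
    have h1 : (Xᵀ * X) *ᵥ (βOLS - βt) = (X - Xs)ᵀ *ᵥ (y - X *ᵥ βt) := by
      rw [mulVec_sub, hNβ, transpose_sub, sub_mulVec, mulVec_sub, mulVec_sub,
        mulVec_mulVec, mulVec_mulVec, hNβt]
      abel
    calc βOLS - βt = ((Xᵀ * X)⁻¹ * (Xᵀ * X)) *ᵥ (βOLS - βt) := by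
            rw [hXXl, one_mulVec]
      _ = (Xᵀ * X)⁻¹ *ᵥ ((X - Xs)ᵀ *ᵥ (y - X *ᵥ βt)) := by
            rw [← mulVec_mulVec, h1]
  set r : ℝ := vnorm (y - X *ᵥ βOLS) with hr
  set s : ℝ := vnorm (y - X *ᵥ βt) with hs
  set δ : ℝ := vnorm (X *ᵥ (βOLS - βt)) with hδ
  have hrpos : 0 < r := vnorm_pos (sub_ne_zero.mpr hy)
  have hδ0 : 0 ≤ δ := vnorm_nonneg _
  have hs0 : 0 ≤ s := vnorm_nonneg _
  have hpyth : s ^ 2 = r ^ 2 + δ ^ 2 := by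
    have h := pythagoras X (y - X *ᵥ βOLS) hnormal (βOLS - βt)
    rw [show y - X *ᵥ βOLS + X *ᵥ (βOLS - βt) = y - X *ᵥ βt by
      rw [mulVec_sub]; abel] at h
    exact h
  have hry : r ≤ vnorm y := by
    have h := pythagoras X (y - X *ᵥ βOLS) hnormal βOLS
    rw [show y - X *ᵥ βOLS + X *ᵥ βOLS = y by abel] at h
    nlinarith [vnorm_nonneg (X *ᵥ βOLS), vnorm_nonneg y, hrpos]
  have hδle : δ ≤ ε' * κ2 * s := by
    have hT : ‖(X - Xs)ᵀ‖ = ‖X - Xs‖ := by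
      rw [← Matrix.conjTranspose_eq_transpose_of_trivial]
      exact Matrix.l2_opNorm_conjTranspose _
    have b1 : δ ≤ ‖X‖ * vnorm ((Xᵀ * X)⁻¹ *ᵥ ((X - Xs)ᵀ *ᵥ (y - X *ᵥ βt))) := by
      rw [hδ, hkey]; exact vnorm_mulVec_le _ _
    have b2 : vnorm ((Xᵀ * X)⁻¹ *ᵥ ((X - Xs)ᵀ *ᵥ (y - X *ᵥ βt)))
        ≤ ‖(Xᵀ * X)⁻¹‖ * vnorm ((X - Xs)ᵀ *ᵥ (y - X *ᵥ βt)) := vnorm_mulVec_le _ _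
    have b3 : vnorm ((X - Xs)ᵀ *ᵥ (y - X *ᵥ βt)) ≤ (ε' * ‖X‖) * s := by
      calc vnorm ((X - Xs)ᵀ *ᵥ (y - X *ᵥ βt)) ≤ ‖(X - Xs)ᵀ‖ * s := vnorm_mulVec_le _ _
        _ ≤ (ε' * ‖X‖) * s := by
            rw [hT]; exact mul_le_mul_of_nonneg_right hL hs0
    have hX0 : (0:ℝ) ≤ ‖X‖ := norm_nonneg _
    have hI0 : (0:ℝ) ≤ ‖(Xᵀ * X)⁻¹‖ := norm_nonneg _
    calc δ ≤ ‖X‖ * vnorm ((Xᵀ * X)⁻¹ *ᵥ ((X - Xs)ᵀ *ᵥ (y - X *ᵥ βt))) := b1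
      _ ≤ ‖X‖ * (‖(Xᵀ * X)⁻¹‖ * vnorm ((X - Xs)ᵀ *ᵥ (y - X *ᵥ βt))) :=
          mul_le_mul_of_nonneg_left b2 hX0
      _ ≤ ‖X‖ * (‖(Xᵀ * X)⁻¹‖ * ((ε' * ‖X‖) * s)) :=
          mul_le_mul_of_nonneg_left (mul_le_mul_of_nonneg_left b3 hI0) hX0
      _ = ε' * κ2 * s := by rw [hκ2]; ring
  have hκ0 : 0 ≤ κ2 := by rw [hκ2]; positivity
  have he : 0 < Real.sqrt ε := Real.sqrt_pos.mpr hε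
  have he2 : Real.sqrt ε ^ 2 = ε := Real.sq_sqrt hε.le
  rcases eq_or_lt_of_le hκ0 with hκz | hκpos
  · exfalso
    rw [← hκz] at hε'le
    simp at hε'le
    linarith
  have ht : ε' * κ2 * (1 + Real.sqrt ε) ≤ Real.sqrt ε :=
    t_bound hrpos he hκpos (vnorm_nonneg y) hry hε'pos hε'le
  have hδer : δ ≤ Real.sqrt ε * r :=
    scalar_step hrpos hδ0 hs0 he (by positivity) hpyth hδle ht
  have hsq : δ * δ ≤ (Real.sqrt ε * r) * (Real.sqrt ε * r) :=
    mul_le_mul hδer hδer hδ0 (by positivity)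
  constructor
  · nlinarith [sq_nonneg δ]
  · nlinarith [he2, hsq]
end

section
/- Let X ∈ ℝ^{n×p} have XᵀX invertible, let X* ∈ ℝ^{n×p} with X*ᵀX invertible, set L = X − X*, and suppose ‖L‖₂ ≤ ε′‖X‖₂ for some ε′ > 0 and that λ₀ := ‖(XᵀX)⁻¹LᵀX‖₂ < 1. Then the difference of hat matrices satisfies ‖X(XᵀX)⁻¹Xᵀ − X(X*ᵀX)⁻¹X*ᵀ‖₂ ≤ ((λ₀ + ε′)/(1 − λ₀)) · ‖X‖₂² · ‖(XᵀX)⁻¹‖₂. -/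
set_option maxHeartbeats 1000000


open Matrix
open scoped Matrix.Norms.L2Operator

/-- **Bound on the difference of hat matrices.** If `L = X − X*` satisfies
`‖L‖₂ ≤ ε′‖X‖₂` and `λ₀ = ‖(XᵀX)⁻¹LᵀX‖₂ < 1`, then
`‖X(XᵀX)⁻¹Xᵀ − X(X*ᵀX)⁻¹X*ᵀ‖₂ ≤ ((λ₀+ε′)/(1−λ₀))·‖X‖₂²·‖(XᵀX)⁻¹‖₂`. -/
theorem hat_matrix_difference_bound
    (n p : ℕ) (hp : 1 ≤ p) (hpn : p ≤ n)
    (X Xs : Matrix (Fin n) (Fin p) ℝ)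
    (hX : IsUnit (Xᵀ * X).det) (hXs : IsUnit (Xsᵀ * X).det)
    (L : Matrix (Fin n) (Fin p) ℝ) (hLdef : L = X - Xs)
    (ε' : ℝ) (hε' : 0 < ε') (hL : ‖L‖ ≤ ε' * ‖X‖)
    (lam0 : ℝ) (hlam0 : lam0 = ‖(Xᵀ * X)⁻¹ * Lᵀ * X‖) (hlt : lam0 < 1) :
    ‖X * (Xᵀ * X)⁻¹ * Xᵀ - X * (Xsᵀ * X)⁻¹ * Xsᵀ‖ ≤
      ((lam0 + ε') / (1 - lam0)) * ‖X‖ ^ 2 * ‖(Xᵀ * X)⁻¹‖ := by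
  haveI : Nonempty (Fin p) := ⟨⟨0, hp⟩⟩
  set A := Xᵀ * X with hA
  set Ai := (Xᵀ * X)⁻¹ with hAi
  set M := Ai * (Lᵀ * X) with hM
  -- Xs = X - L
  have hXsL : Xs = X - L := by rw [hLdef]; abel
  -- A * (1 - M) = Xsᵀ * X
  have hfact : A * (1 - M) = Xsᵀ * X := by
    rw [hXsL]
    simp only [Matrix.mul_sub, Matrix.mul_one, hM, hAi, hA, ← Matrix.mul_assoc,
      Matrix.mul_nonsing_inv (Xᵀ * X) hX, Matrix.one_mul, Matrix.transpose_sub, Matrix.sub_mul]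
  -- invertibility of 1 - M
  have hdet1M : IsUnit (1 - M).det := by
    have := hXs
    rw [← hfact, Matrix.det_mul] at this
    exact isUnit_of_mul_isUnit_right this
  set N := (1 - M)⁻¹ with hN
  have hNl : N * (1 - M) = 1 := Matrix.nonsing_inv_mul _ hdet1M
  have hNid : N = 1 + N * M := by
    have h : N - N * M = 1 := by
      rw [Matrix.mul_sub, Matrix.mul_one] at hNl; exact hNl
    exact sub_eq_iff_eq_add.mp h
  -- inverse of Xsᵀ X
  have hinv : (Xsᵀ * X)⁻¹ = N * Ai := by
    rw [← hfact, Matrix.mul_inv_rev, hN, hAi, hA]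
  -- key identity
  have hkey : X * Ai * Xᵀ - X * (Xsᵀ * X)⁻¹ * Xsᵀ
      = X * (N * (Ai * Lᵀ)) - X * ((N * M) * (Ai * Xᵀ)) := by
    rw [hinv, hXsL]
    have e1 : X * (N * Ai) * Xᵀ = X * Ai * Xᵀ + X * ((N * M) * (Ai * Xᵀ)) := by
      nth_rewrite 1 [hNid]
      simp only [Matrix.add_mul, Matrix.mul_add, Matrix.one_mul, Matrix.mul_assoc]
    have e2 : X * (N * Ai) * Lᵀ = X * (N * (Ai * Lᵀ)) := by
      simp only [Matrix.mul_assoc]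
    rw [Matrix.transpose_sub, Matrix.mul_sub, e1, e2]
    abel
  -- norms
  have hMnorm : ‖M‖ = lam0 := by rw [hlam0, hM, Matrix.mul_assoc]
  have hone : ‖(1 : Matrix (Fin p) (Fin p) ℝ)‖ = 1 := CStarRing.norm_one
  have hNnorm : ‖N‖ * (1 - lam0) ≤ 1 := by
    have hNM : ‖N * M‖ ≤ ‖N‖ * lam0 := by
      rw [← hMnorm]; exact Matrix.l2_opNorm_mul _ _
    have h1 : ‖N‖ ≤ 1 + ‖N‖ * lam0 := by
      calc ‖N‖ = ‖1 + N * M‖ := by rw [← hNid]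
        _ ≤ ‖(1 : Matrix (Fin p) (Fin p) ℝ)‖ + ‖N * M‖ := norm_add_le _ _
        _ ≤ 1 + ‖N‖ * lam0 := by rw [hone]; linarith
    nlinarith
  have hXt : ‖Xᵀ‖ = ‖X‖ := by
    rw [show (Xᵀ : Matrix (Fin p) (Fin n) ℝ) = Xᴴ from (Matrix.conjTranspose_eq_transpose_of_trivial X).symm]
    exact Matrix.l2_opNorm_conjTranspose X
  have hLt : ‖Lᵀ‖ = ‖L‖ := by
    rw [show (Lᵀ : Matrix (Fin p) (Fin n) ℝ) = Lᴴ from (Matrix.conjTranspose_eq_transpose_of_trivial L).symm]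
    exact Matrix.l2_opNorm_conjTranspose L
  have hb1 : ‖X * (N * (Ai * Lᵀ))‖ ≤ ‖X‖ * (‖N‖ * (‖Ai‖ * ‖L‖)) := by
    calc ‖X * (N * (Ai * Lᵀ))‖ ≤ ‖X‖ * ‖N * (Ai * Lᵀ)‖ := Matrix.l2_opNorm_mul _ _
      _ ≤ ‖X‖ * (‖N‖ * ‖Ai * Lᵀ‖) := by
          exact mul_le_mul_of_nonneg_left (Matrix.l2_opNorm_mul _ _) (norm_nonneg _)
      _ ≤ ‖X‖ * (‖N‖ * (‖Ai‖ * ‖L‖)) := by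
          rw [← hLt]
          exact mul_le_mul_of_nonneg_left
            (mul_le_mul_of_nonneg_left (Matrix.l2_opNorm_mul _ _) (norm_nonneg _)) (norm_nonneg _)
  have hb2 : ‖X * ((N * M) * (Ai * Xᵀ))‖ ≤ ‖X‖ * ((‖N‖ * lam0) * (‖Ai‖ * ‖X‖)) := by
    calc ‖X * ((N * M) * (Ai * Xᵀ))‖ ≤ ‖X‖ * ‖(N * M) * (Ai * Xᵀ)‖ := Matrix.l2_opNorm_mul _ _
      _ ≤ ‖X‖ * (‖N * M‖ * ‖Ai * Xᵀ‖) := by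
          exact mul_le_mul_of_nonneg_left (Matrix.l2_opNorm_mul _ _) (norm_nonneg _)
      _ ≤ ‖X‖ * ((‖N‖ * lam0) * (‖Ai‖ * ‖X‖)) := by
          rw [← hMnorm, ← hXt]
          have h1 : ‖N * M‖ ≤ ‖N‖ * ‖M‖ := Matrix.l2_opNorm_mul _ _
          have h2 : ‖Ai * Xᵀ‖ ≤ ‖Ai‖ * ‖Xᵀ‖ := Matrix.l2_opNorm_mul _ _
          exact mul_le_mul_of_nonneg_left
            (mul_le_mul h1 h2 (norm_nonneg _) (by positivity)) (norm_nonneg _)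
  have htotal : ‖X * Ai * Xᵀ - X * (Xsᵀ * X)⁻¹ * Xsᵀ‖
      ≤ ‖X‖ * (‖N‖ * (‖Ai‖ * ‖L‖)) + ‖X‖ * ((‖N‖ * lam0) * (‖Ai‖ * ‖X‖)) := by
    rw [hkey]
    exact (norm_sub_le _ _).trans (add_le_add hb1 hb2)
  have hlamnn : 0 ≤ lam0 := hlam0 ▸ norm_nonneg _
  have hNnn : (0:ℝ) ≤ ‖N‖ := norm_nonneg _
  have hXnn : (0:ℝ) ≤ ‖X‖ := norm_nonneg _
  have hAinn : (0:ℝ) ≤ ‖Ai‖ := norm_nonneg _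
  have hLnn : (0:ℝ) ≤ ‖L‖ := norm_nonneg _
  have h1l : (0:ℝ) < 1 - lam0 := by linarith
  refine htotal.trans ?_
  rw [div_mul_eq_mul_div, div_mul_eq_mul_div, le_div_iff₀ h1l]
  have hLX : ‖L‖ ≤ ε' * ‖X‖ := hL
  nlinarith [mul_nonneg hXnn hAinn, mul_nonneg (mul_nonneg hXnn hXnn) hAinn,
    mul_nonneg hNnn (mul_nonneg hXnn hAinn), sq_nonneg ‖X‖,
    mul_le_mul_of_nonneg_left hLX (mul_nonneg (mul_nonneg hNnn hXnn) hAinn),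
    mul_le_mul_of_nonneg_right hNnorm (mul_nonneg (mul_nonneg hXnn hXnn) (mul_nonneg hAinn (by linarith : (0:ℝ) ≤ lam0 + ε')))]
end
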